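/- Strong disjunction property: if L is any of K4_h, KD4_h, S4_h, or GL_h, and L ⊢ □n A ∨ □m B, then L ⊢ A or L ⊢ B. -/

import Mathlib

/-- Poly-modal formulas with modalities `□n` for `n : ℕ`. -/
inductive Fm : Type
  | atom : ℕ → Fm
  | bot  : Fm
  | and  : Fm → Fm → Fm
  | or   : Fm → Fm → Fm
  | imp  : Fm → Fm → Fm
  | neg  : Fm → Fm
  | box  : ℕ → Fm → Fm
  deriving DecidableEq

def Fm.top : Fm := Fm.neg Fm.bot

/-- `i` occurs as a modality index in the formula. -/
def occursBox (i : ℕ) : Fm → Prop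
  | .atom _ => False
  | .bot => False
  | .and A B => occursBox i A ∨ occursBox i B
  | .or A B => occursBox i A ∨ occursBox i B
  | .imp A B => occursBox i A ∨ occursBox i B
  | .neg A => occursBox i A
  | .box n A => i = n ∨ occursBox i A

/-- `n` is strictly greater than every modality index occurring in `A`
    (the paper's "`n > r(A)`"). -/
def BoxLt (A : Fm) (n : ℕ) : Prop := ∀ i, occursBox i A → i < n

/-- The language `L∞`: each box index strictly exceeds all box indices in its scope. -/
inductive Linf : Fm → Prop
  | atom (k : ℕ) : Linf (.atom k)
  | bot : Linf .bot
  | and {A B : Fm} : Linf A → Linf B → Linf (.and A B)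
  | or {A B : Fm} : Linf A → Linf B → Linf (.or A B)
  | imp {A B : Fm} : Linf A → Linf B → Linf (.imp A B)
  | neg {A : Fm} : Linf A → Linf (.neg A)
  | box {A : Fm} (n : ℕ) : Linf A → BoxLt A n → Linf (.box n A)

/-- Boolean evaluation treating atoms and boxed formulas as propositional atoms. -/
def evalWith (v : Fm → Bool) : Fm → Bool
  | .atom k => v (.atom k)
  | .bot => false
  | .and A B => evalWith v A && evalWith v B
  | .or A B => evalWith v A || evalWith v B
  | .imp A B => !(evalWith v A) || evalWith v B
  | .neg A => !(evalWith v A)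
  | .box n A => v (.box n A)

/-- Classical propositional tautologies (on `L∞`-formulas as atoms). -/
def Taut (A : Fm) : Prop := ∀ v, evalWith v A = true

def axH (F : Fm) : Prop := ∃ A n, Linf (Fm.box n A) ∧ F = (Fm.box n A).imp (Fm.box (n+1) A)
def axK (F : Fm) : Prop := ∃ A B n, Linf (Fm.box n (A.imp B)) ∧
    F = (Fm.box n (A.imp B)).imp ((Fm.box n A).imp (Fm.box n B))
def axFour (F : Fm) : Prop := ∃ A n, Linf (Fm.box n A) ∧
    F = (Fm.box n A).imp (Fm.box (n+1) (Fm.box n A))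
def axD (F : Fm) : Prop := ∃ n, F = Fm.neg (Fm.box n Fm.bot)
def axT (F : Fm) : Prop := ∃ A n, Linf (Fm.box n A) ∧ F = (Fm.box n A).imp A
def axL (F : Fm) : Prop := ∃ A n, Linf (Fm.box n A) ∧
    F = (Fm.box (n+1) ((Fm.box n A).imp A)).imp (Fm.box n A)
def axFive (F : Fm) : Prop := ∃ A n, Linf (Fm.box n A) ∧
    F = ((Fm.box n A).neg).imp (Fm.box (n+1) ((Fm.box n A).neg))

/-- Hilbert-style provability over `L∞` from a set of axiom (schema instances):
    classical tautologies, modus ponens, and necessitation restricted to `n > r(A)`. -/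
inductive Prv (Ax : Fm → Prop) : Fm → Prop
  | ax {A : Fm} : Ax A → Prv Ax A
  | taut {A : Fm} : Linf A → Taut A → Prv Ax A
  | mp {A B : Fm} : Prv Ax (A.imp B) → Prv Ax A → Prv Ax B
  | nec {A : Fm} (n : ℕ) : Prv Ax A → BoxLt A n → Prv Ax (Fm.box n A)

def K4hAx (F : Fm) : Prop := axH F ∨ axK F ∨ axFour F
def KD4hAx (F : Fm) : Prop := K4hAx F ∨ axD F
def S4hAx (F : Fm) : Prop := K4hAx F ∨ axT F
def GLhAx (F : Fm) : Prop := K4hAx F ∨ axL F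
def KD45hAx (F : Fm) : Prop := KD4hAx F ∨ axFive F

def K4h : Fm → Prop := Prv K4hAx
def KD4h : Fm → Prop := Prv KD4hAx
def S4h : Fm → Prop := Prv S4hAx
def GLh : Fm → Prop := Prv GLhAx

def conjList (l : List Fm) : Fm := l.foldr Fm.and Fm.top
def disjList (l : List Fm) : Fm := l.foldr Fm.or Fm.bot

/-- `Γ ⊢_L A` : some finite conjunction of members of `Γ` implies `A` in `L`. -/
def Deriv (Ax : Fm → Prop) (Γ : Set Fm) (A : Fm) : Prop :=
  ∃ l : List Fm, (∀ B ∈ l, B ∈ Γ) ∧ Prv Ax ((conjList l).imp A)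

/-- Provability-style semantics: boxes read as provability (plus truth if `t`). -/
def sem (pred : Fm → Prop) (t : Bool) : Fm → Prop
  | .atom _ => True
  | .bot => False
  | .and X Y => sem pred t X ∧ sem pred t Y
  | .or X Y => sem pred t X ∨ sem pred t Y
  | .imp X Y => sem pred t X → sem pred t Y
  | .neg X => ¬ sem pred t X
  | .box _ X => pred X ∧ (t = true → sem pred t X)

open Classical in
noncomputable def vB (pred : Fm → Prop) (t : Bool) : Fm → Bool :=
  fun F => decide (sem pred t F)

open Classical in
lemma eval_vB (pred : Fm → Prop) (t : Bool) :
    ∀ F, (evalWith (vB pred t) F = true ↔ sem pred t F) := by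
  intro F
  induction F with
  | atom k =>
      simp [evalWith, sem, vB]
      exact (@decide_eq_true_iff _ (Classical.propDecidable _)).mpr trivial
  | bot => simp [evalWith, sem]
  | and X Y ihX ihY => simp [evalWith, sem, Bool.and_eq_true, ihX, ihY]
  | or X Y ihX ihY => simp [evalWith, sem, Bool.or_eq_true, ihX, ihY]
  | imp X Y ihX ihY =>
      simp only [evalWith, sem, Bool.or_eq_true, Bool.not_eq_true', ← ihX, ← ihY]
      constructor
      · rintro (h | h) hx
        · rw [hx] at h; cases h
        · exact h
      · intro h
        cases hx : evalWith (vB pred t) X with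
        | false => exact Or.inl rfl
        | true => exact Or.inr (h hx)
  | neg X ihX => simp [evalWith, sem, Bool.not_eq_true', ← ihX]
  | box nn X ihX =>
      simp only [evalWith, sem, vB, decide_eq_true_iff]
      exact @decide_eq_true_iff _ (Classical.propDecidable _)

lemma taut_sem (pred : Fm → Prop) (t : Bool) {F : Fm} (h : Taut F) :
    sem pred t F := (eval_vB pred t F).1 (h (vB pred t))

lemma linf_boxlt {n : ℕ} {A : Fm} (h : Linf (Fm.box n A)) : BoxLt A n := by
  cases h with | box _ _ hlt => exact hlt

/-- Generic soundness for the provability semantics. -/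
lemma sound (P : Fm → Prop) (t : Bool)
    (hax : ∀ F, P F → sem (Prv P) t F) :
    ∀ F, Prv P F → sem (Prv P) t F := by
  intro F h
  induction h with
  | ax hF => exact hax _ hF
  | taut _ hT => exact taut_sem _ _ hT
  | mp _ _ ihAB ihA => exact ihAB ihA
  | nec nn hA _ ihA => exact ⟨hA, fun _ => ihA⟩

lemma k4_core {P : Fm → Prop} (t : Bool) (hsub : ∀ F, K4hAx F → P F) :
    ∀ F, K4hAx F → sem (Prv P) t F := by
  rintro F (⟨X, k, hL, rfl⟩ | ⟨X, Y, k, hL, rfl⟩ | ⟨X, k, hL, rfl⟩)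
  · -- H
    exact fun h => h
  · -- K
    rintro ⟨hXY, hXYs⟩ ⟨hX, hXs⟩
    exact ⟨Prv.mp hXY hX, fun ht => hXYs ht (hXs ht)⟩
  · -- 4
    rintro ⟨hX, hXs⟩
    exact ⟨Prv.nec k hX (linf_boxlt hL), fun ht => ⟨hX, hXs⟩⟩

theorem sem_ax_K4 : ∀ F, K4hAx F → sem (Prv K4hAx) false F :=
  k4_core false (fun _ h => h)

theorem sem_ax_KD4 : ∀ F, KD4hAx F → sem (Prv KD4hAx) true F := by
  rintro F (h4 | ⟨k, rfl⟩)
  · exact k4_core true (fun _ h => Or.inl h) F h4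
  · rintro ⟨-, hs⟩
    exact hs rfl

theorem sem_ax_S4 : ∀ F, S4hAx F → sem (Prv S4hAx) true F := by
  rintro F (h4 | ⟨X, k, hL, rfl⟩)
  · exact k4_core true (fun _ h => Or.inl h) F h4
  · rintro ⟨hX, hXs⟩
    exact hXs rfl

theorem sem_ax_GL : ∀ F, GLhAx F → sem (Prv GLhAx) false F := by
  rintro F (h4 | ⟨X, k, hL, rfl⟩)
  · exact k4_core false (fun _ h => Or.inl h) F h4
  · rintro ⟨himp, -⟩
    -- Löb's rule: from ⊢ □kX → X conclude ⊢ □kX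
    have hlt : BoxLt ((Fm.box k X).imp X) (k + 1) := by
      intro i hi
      have hX : occursBox i X → i < k + 1 := fun h =>
        Nat.lt_succ_of_lt (linf_boxlt hL i h)
      rcases hi with (rfl | h) | h
      · exact Nat.lt_succ_self _
      · exact hX h
      · exact hX h
    have hbox : Prv GLhAx (Fm.box (k+1) ((Fm.box k X).imp X)) :=
      Prv.nec _ himp hlt
    have hax : Prv GLhAx ((Fm.box (k+1) ((Fm.box k X).imp X)).imp (Fm.box k X)) :=
      Prv.ax (Or.inr ⟨X, k, hL, rfl⟩)
    exact ⟨Prv.mp himp (Prv.mp hax hbox), fun h => by cases h⟩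

/-- the strong disjunction property for `K4_h`, `KD4_h`, `S4_h`, `GL_h`. -/
theorem strong_disjunction_property (P : Fm → Prop)
    (hP : P = K4hAx ∨ P = KD4hAx ∨ P = S4hAx ∨ P = GLhAx)
    (n m : ℕ) (A B : Fm) (hA : Linf (Fm.box n A)) (hB : Linf (Fm.box m B))
    (h : Prv P ((Fm.box n A).or (Fm.box m B))) :
    Prv P A ∨ Prv P B := by
  rcases hP with rfl | rfl | rfl | rfl
  · rcases sound _ false sem_ax_K4 _ h with ⟨hp, -⟩ | ⟨hp, -⟩
    · exact Or.inl hp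
    · exact Or.inr hp
  · rcases sound _ true sem_ax_KD4 _ h with ⟨hp, -⟩ | ⟨hp, -⟩
    · exact Or.inl hp
    · exact Or.inr hp
  · rcases sound _ true sem_ax_S4 _ h with ⟨hp, -⟩ | ⟨hp, -⟩
    · exact Or.inl hp
    · exact Or.inr hp
  · rcases sound _ false sem_ax_GL _ h with ⟨hp, -⟩ | ⟨hp, -⟩
    · exact Or.inl hp
    · exact Or.inr hp
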